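/- Let 𝔄 be a Boolean algebra with an operator ◇. If ◇ is completely additive, then 𝔄 satisfies condition 𝓡: for all a, b, if a ∧ ◇b ≠ ⊥ then there exists c with ⊥ ≠ c ≤ b such that for all d with ⊥ ≠ d ≤ c, a ∧ ◇d ≠ ⊥. -/
import Mathlib


/-- Complete additivity implies condition 𝓡. -/
theorem stmt_2 {α : Type*} [BooleanAlgebra α] (f : α → α)
    (hjoin : ∀ x y : α, f (x ⊔ y) = f x ⊔ f y) (hbot : f ⊥ = ⊥)
    (hV : ∀ (X : Set α) (s : α), IsLUB X s → IsLUB (f '' X) (f s)) :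
    ∀ a b : α, a ⊓ f b ≠ ⊥ →
      ∃ c, c ≠ ⊥ ∧ c ≤ b ∧ ∀ d, d ≠ ⊥ → d ≤ c → a ⊓ f d ≠ ⊥ := by
  intro a b hab
  by_contra h
  push_neg at h
  set X : Set α := {x | x ≤ b ∧ a ⊓ f x = ⊥} with hX
  have hlub : IsLUB X b := by
    constructor
    · intro x hx; exact hx.1
    · intro u hu
      by_contra hbu
      have hne : b \ u ≠ ⊥ := fun h0 => hbu (sdiff_eq_bot_iff.mp h0)
      obtain ⟨d, hd0, hdc, hda⟩ := h (b \ u) hne sdiff_le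
      have hdX : d ∈ X := ⟨hdc.trans sdiff_le, hda⟩
      have hdu : d ≤ u := hu hdX
      have hdu' : d ≤ uᶜ := hdc.trans (by rw [sdiff_eq]; exact inf_le_right)
      exact hd0 (le_bot_iff.mp ((le_inf hdu hdu').trans (le_of_eq inf_compl_eq_bot)))
  have hlub' := hV X b hlub
  have hfa : f b ≤ aᶜ := hlub'.2 (by
    rintro y ⟨x, hx, rfl⟩
    exact le_compl_iff_disjoint_left.mpr (disjoint_iff.mpr hx.2))
  exact hab (le_bot_iff.mp ((inf_le_inf_left a hfa).trans (le_of_eq inf_compl_eq_bot)))
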